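/- arXiv:0807.1679 — 2 statements merged into one kernel-verified Lean document; each statement's English description precedes it below -/
import Mathlib

section
/- Let n ≥ 1 and let A be a nonempty subset of {0,1}^n. Then |∂*A| ≥ 4n · (1/2 − √(H⁻¹(log|A|/n)·(1 − H⁻¹(log|A|/n)))) · |A|/2^n. -/
/-- Expectation of `g` over the uniform measure on the Hamming cube `{0,1}^n`. -/
noncomputable def cubeE (n : ℕ) (g : (Fin n → Bool) → ℝ) : ℝ :=
  (∑ x : Fin n → Bool, g x) / 2 ^ n

/-- `E_x ∑_{y ∼ x} (f x - f y)^2` on the Hamming cube `{0,1}^n`. -/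
noncomputable def cubeD2 (n : ℕ) (f : (Fin n → Bool) → ℝ) : ℝ :=
  cubeE n (fun x => ∑ i : Fin n, (f x - f (Function.update x i (!x i))) ^ 2)

/-- `Ent(f²) = E[f² log f²] - E[f²] log E[f²]` (note `Real.log 0 = 0`). -/
noncomputable def cubeEnt (n : ℕ) (f : (Fin n → Bool) → ℝ) : ℝ :=
  cubeE n (fun x => f x ^ 2 * Real.log (f x ^ 2)) -
    cubeE n (fun x => f x ^ 2) * Real.log (cubeE n (fun x => f x ^ 2))

/-- The fractional edge-boundary size of `A ⊆ {0,1}^n`: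
`|∂*A| = inf { E_x ∑_{y∼x} (f x − f y)² : supp f ⊆ A, E[f²] = |A|/2^n }`. -/
noncomputable def fracBoundary (n : ℕ) (A : Finset (Fin n → Bool)) : ℝ :=
  sInf {v : ℝ | ∃ f : (Fin n → Bool) → ℝ,
    (∀ x, x ∉ A → f x = 0) ∧
    cubeE n (fun x => f x ^ 2) = (A.card : ℝ) / 2 ^ n ∧
    v = cubeD2 n f}


open Real Set

section GoodAbstract

variable (lam c h : ℝ)

/-- the core 1-D inequality -/
theorem good_abstract (h0 : 0 < h) (h12 : h < 1/2) (hlam : 0 < lam) (hc : 0 < c)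
    (e0 : (c - lam * Real.log h) * (c - lam * Real.log (1 - h)) = 1)
    (e1 : h * (c - lam * Real.log h) = (1 - h) * (c - lam * Real.log (1 - h))) :
    ∀ u : ℝ, 0 < u → u < 1 →
      1 ≤ (c - lam * Real.log u) * (c - lam * Real.log (1 - u)) := by
  set s : ℝ → ℝ := fun u => c - lam * Real.log u with hs
  set N : ℝ → ℝ := fun u => s u * s (1 - u) with hN
  set D : ℝ → ℝ := fun u => u * s u - (1 - u) * s (1 - u) with hD
  set ψ : ℝ → ℝ := fun u => (s u - lam) + (s (1 - u) - lam) with hψ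
  -- positivity of s on (0,1)
  have hspos : ∀ u : ℝ, 0 < u → u < 1 → 0 < s u := by
    intro u hu hu1
    have : Real.log u < 0 := Real.log_neg hu hu1
    have : lam * Real.log u < 0 := mul_neg_of_pos_of_neg hlam this
    simp only [hs]
    linarith
  -- derivatives
  have hds : ∀ u : ℝ, 0 < u → HasDerivAt s (-(lam / u)) u := by
    intro u hu
    have h1 : HasDerivAt Real.log u⁻¹ u := Real.hasDerivAt_log (ne_of_gt hu)
    have h2 : HasDerivAt (fun x => lam * Real.log x) (lam * u⁻¹) u := h1.const_mul lam
    have h3 : HasDerivAt (fun x => c - lam * Real.log x) (-(lam * u⁻¹)) u := h2.const_sub c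
    simpa [div_eq_mul_inv] using h3
  have hds' : ∀ u : ℝ, u < 1 → HasDerivAt (fun x => s (1 - x)) (lam / (1 - u)) u := by
    intro u hu1
    have h1 : HasDerivAt (fun x : ℝ => 1 - x) (-1) u := by
      simpa using (hasDerivAt_id u).const_sub 1
    have h2 : HasDerivAt s (-(lam / (1 - u))) (1 - u) := hds (1 - u) (by linarith)
    have h3 := h2.comp u h1
    refine h3.congr_deriv ?_
    ring
  have hdD : ∀ u : ℝ, 0 < u → u < 1 → HasDerivAt D (ψ u) u := by
    intro u hu hu1
    have h1 : HasDerivAt (fun x : ℝ => x * s x) (1 * s u + u * (-(lam / u))) u :=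
      (hasDerivAt_id u).mul (hds u hu)
    have h2 : HasDerivAt (fun x : ℝ => (1 - x) * s (1 - x))
        ((-1) * s (1 - u) + (1 - u) * (lam / (1 - u))) u := by
      have ha : HasDerivAt (fun x : ℝ => 1 - x) (-1) u := by
        simpa using (hasDerivAt_id u).const_sub 1
      exact ha.mul (hds' u hu1)
    have h3 := h1.sub h2
    refine h3.congr_deriv ?_
    have hu0 : u ≠ 0 := ne_of_gt hu
    have hu10 : (1 : ℝ) - u ≠ 0 := by linarith
    field_simp [hψ]
    ring
  have hdN : ∀ u : ℝ, 0 < u → u < 1 →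
      HasDerivAt N (lam * D u / (u * (1 - u))) u := by
    intro u hu hu1
    have h1 := (hds u hu).mul (hds' u hu1)
    refine h1.congr_deriv ?_
    have hu0 : u ≠ 0 := ne_of_gt hu
    have hu10 : (1 : ℝ) - u ≠ 0 := by linarith
    field_simp [hD]
    ring
  -- ψ is antitone on (0, 1/2]
  have hpsi : ∀ x y : ℝ, 0 < x → x ≤ y → y ≤ 1/2 → ψ y ≤ ψ x := by
    intro x y hx hxy hy
    have hxpos : (0:ℝ) < x := hx
    have hypos : (0:ℝ) < y := lt_of_lt_of_le hx hxy
    have hx1 : x < 1 := by linarith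
    have hy1 : y < 1 := by linarith
    have hprod : x * (1 - x) ≤ y * (1 - y) := by nlinarith
    have hxx : (0:ℝ) < x * (1 - x) := by nlinarith
    have hlog : Real.log (x * (1 - x)) ≤ Real.log (y * (1 - y)) :=
      Real.log_le_log hxx hprod
    have hlx : Real.log (x * (1 - x)) = Real.log x + Real.log (1 - x) :=
      Real.log_mul (ne_of_gt hxpos) (by linarith)
    have hly : Real.log (y * (1 - y)) = Real.log y + Real.log (1 - y) :=
      Real.log_mul (ne_of_gt hypos) (by linarith)
    simp only [hψ, hs]
    rw [hlx, hly] at hlog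
    nlinarith [hlog]
  -- D h = 0, D (1/2) = 0, N h = 1
  have hDh : D h = 0 := by simp only [hD, hs]; linarith [e1]
  have hDhalf : D (1/2 : ℝ) = 0 := by
    simp only [hD]
    norm_num
  have hNh : N h = 1 := by simp only [hN]; exact e0
  -- continuity helpers
  have hcontD : ∀ p q : ℝ, 0 < p → q < 1 → ContinuousOn D (Icc p q) := by
    intro p q hp hq
    intro x hx
    exact ((hdD x (lt_of_lt_of_le hp hx.1) (lt_of_le_of_lt hx.2 hq)).continuousAt).continuousWithinAt
  have hcontN : ∀ p q : ℝ, 0 < p → q < 1 → ContinuousOn N (Icc p q) := by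
    intro p q hp hq
    intro x hx
    exact ((hdN x (lt_of_lt_of_le hp hx.1) (lt_of_le_of_lt hx.2 hq)).continuousAt).continuousWithinAt
  -- MVT: a zero of ψ in (h, 1/2)
  have hzero : ∃ ξ ∈ Ioo h (1/2 : ℝ), ψ ξ = 0 := by
    obtain ⟨ξ, hξ, hval⟩ := exists_hasDerivAt_eq_slope D ψ h12
      (hcontD h (1/2) h0 (by norm_num))
      (fun x hx => hdD x (lt_trans h0 hx.1) (by linarith [hx.2]))
    refine ⟨ξ, hξ, ?_⟩
    rw [hval, hDhalf, hDh]
    simp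
  obtain ⟨ξ₃, hξ₃, hψξ₃⟩ := hzero
  -- D ≤ 0 on (0, h]
  have hDneg : ∀ u : ℝ, 0 < u → u ≤ h → D u ≤ 0 := by
    intro u hu huh
    rcases eq_or_lt_of_le huh with rfl | hlt
    · exact le_of_eq hDh
    · by_contra hpos
      push_neg at hpos
      obtain ⟨ξ₀, hξ₀, hval⟩ := exists_hasDerivAt_eq_slope D ψ hlt
        (hcontD u h hu (by linarith))
        (fun x hx => hdD x (lt_trans hu hx.1) (by linarith [hx.2]))
      have h1 : ψ ξ₀ < 0 := by
        rw [hval, hDh]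
        apply div_neg_of_neg_of_pos <;> linarith
      have h2 : ψ ξ₀ ≥ ψ ξ₃ := by
        apply hpsi _ _ (lt_trans hu hξ₀.1) (le_of_lt (lt_trans hξ₀.2 hξ₃.1)) (le_of_lt hξ₃.2)
      linarith [hψξ₃]
  -- D ≥ 0 on [h, 1/2]
  have hDpos : ∀ u : ℝ, h ≤ u → u ≤ 1/2 → 0 ≤ D u := by
    intro u huh hu12
    rcases eq_or_lt_of_le huh with rfl | hlt
    · exact le_of_eq hDh.symm
    rcases eq_or_lt_of_le hu12 with rfl | hlt2
    · exact le_of_eq hDhalf.symm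
    by_contra hneg
    push_neg at hneg
    obtain ⟨ξ₁, hξ₁, hval₁⟩ := exists_hasDerivAt_eq_slope D ψ hlt
      (hcontD h u h0 (by linarith))
      (fun x hx => hdD x (lt_trans h0 hx.1) (by linarith [hx.2]))
    obtain ⟨ξ₂, hξ₂, hval₂⟩ := exists_hasDerivAt_eq_slope D ψ hlt2
      (hcontD u (1/2) (lt_trans h0 hlt) (by norm_num))
      (fun x hx => hdD x (lt_trans (lt_trans h0 hlt) hx.1) (by linarith [hx.2]))
    have h1 : ψ ξ₁ < 0 := by
      rw [hval₁, hDh]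
      apply div_neg_of_neg_of_pos <;> linarith
    have h2 : 0 < ψ ξ₂ := by
      rw [hval₂, hDhalf]
      apply div_pos <;> linarith
    have h3 : ψ ξ₂ ≤ ψ ξ₁ := by
      apply hpsi _ _ (lt_trans h0 hξ₁.1) (le_of_lt (lt_trans hξ₁.2 hξ₂.1)) (le_of_lt hξ₂.2)
    linarith
  -- N ≥ 1 on (0, 1/2]
  have hNmain : ∀ u : ℝ, 0 < u → u ≤ 1/2 → 1 ≤ N u := by
    intro u hu hu12
    rcases lt_trichotomy u h with hlt | rfl | hgt
    · obtain ⟨ζ, hζ, hval⟩ := exists_hasDerivAt_eq_slope N (fun x => lam * D x / (x * (1 - x))) hlt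
        (hcontN u h hu (by linarith))
        (fun x hx => hdN x (lt_trans hu hx.1) (by linarith [hx.2]))
      have hζpos : 0 < ζ := lt_trans hu hζ.1
      have hζ1 : ζ * (1 - ζ) > 0 := by nlinarith [hζ.2]
      have hDζ : D ζ ≤ 0 := hDneg ζ hζpos (le_of_lt hζ.2)
      have hnum : lam * D ζ ≤ 0 := mul_nonpos_of_nonneg_of_nonpos (le_of_lt hlam) hDζ
      have hderiv : lam * D ζ / (ζ * (1 - ζ)) ≤ 0 := div_nonpos_of_nonpos_of_nonneg hnum (le_of_lt hζ1)
      rw [hval] at hderiv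
      have : N h - N u ≤ 0 := by
        have hdenom : 0 < h - u := by linarith
        by_contra hcon
        push_neg at hcon
        have := div_pos hcon hdenom
        linarith
      rw [hNh] at this
      linarith
    · rw [hNh]
    · obtain ⟨ζ, hζ, hval⟩ := exists_hasDerivAt_eq_slope N (fun x => lam * D x / (x * (1 - x))) hgt
        (hcontN h u h0 (by linarith))
        (fun x hx => hdN x (lt_trans h0 hx.1) (by linarith [hx.2]))
      have hζpos : 0 < ζ := lt_trans h0 hζ.1
      have hζ1 : ζ * (1 - ζ) > 0 := by nlinarith [lt_of_lt_of_le hζ.2 hu12]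
      have hDζ : 0 ≤ D ζ := hDpos ζ (le_of_lt hζ.1) (le_of_lt (lt_of_lt_of_le hζ.2 hu12))
      have hnum : 0 ≤ lam * D ζ := mul_nonneg (le_of_lt hlam) hDζ
      have hderiv : 0 ≤ lam * D ζ / (ζ * (1 - ζ)) := div_nonneg hnum (le_of_lt hζ1)
      rw [hval] at hderiv
      have : 0 ≤ N u - N h := by
        have hdenom : 0 < u - h := by linarith
        by_contra hcon
        push_neg at hcon
        have := div_neg_of_neg_of_pos hcon hdenom
        linarith
      rw [hNh] at this
      linarith
  -- conclude, with symmetry for u > 1/2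
  intro u hu hu1
  rcases le_or_gt u (1/2 : ℝ) with hle | hgt
  · exact hNmain u hu hle
  · have h1 : 1 ≤ N (1 - u) := hNmain (1 - u) (by linarith) (by linarith)
    have h2 : N (1 - u) = (c - lam * Real.log u) * (c - lam * Real.log (1 - u)) := by
      simp only [hN, hs, sub_sub_cancel]
      ring
    linarith [h1, h2.symm.le, h2.le]

end GoodAbstract

/-- classic: `h log h < (1-h) log (1-h)` for `0 < h < 1/2` -/
theorem claimM (h : ℝ) (h0 : 0 < h) (h12 : h < 1/2) :
    h * Real.log h < (1 - h) * Real.log (1 - h) := by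
  rcases lt_or_ge h (Real.exp (-1)) with hsmall | hbig
  · -- small h
    have h1h : (0:ℝ) < 1 - h := by linarith
    have h1 : Real.log ((1 - h)⁻¹) ≤ (1 - h)⁻¹ - 1 :=
      Real.log_le_sub_one_of_pos (by positivity)
    have h2 : Real.log ((1 - h)⁻¹) = -Real.log (1 - h) := Real.log_inv _
    have h3 : (1 - h)⁻¹ - 1 = h / (1 - h) := by
      rw [inv_eq_one_div, div_sub_one (ne_of_gt h1h)]
      congr 1
      ring
    have h4 : -Real.log (1 - h) ≤ h / (1 - h) := by rw [← h2, ← h3]; exact h1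
    have h5 : -(1 - h) * Real.log (1 - h) ≤ h := by
      have h6 := mul_le_mul_of_nonneg_left h4 (le_of_lt h1h)
      have heq : (1 - h) * (h / (1 - h)) = h := by field_simp
      rw [heq] at h6
      linarith
    have h6 : Real.log h < -1 := by
      have := Real.log_lt_log h0 hsmall
      rwa [Real.log_exp] at this
    nlinarith
  · -- h ∈ [e⁻¹, 1/2): MVT for η(x) = (1-x) log (1-x) - x log x
    set η : ℝ → ℝ := fun x => (1 - x) * Real.log (1 - x) - x * Real.log x with hη
    have hd : ∀ x : ℝ, 0 < x → x < 1 →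
        HasDerivAt η (-(2 + Real.log x + Real.log (1 - x))) x := by
      intro x hx hx1
      have ha : HasDerivAt (fun y : ℝ => 1 - y) (-1) x := by
        simpa using (hasDerivAt_id x).const_sub 1
      have hb : HasDerivAt Real.log (1 - x)⁻¹ (1 - x) := Real.hasDerivAt_log (by linarith)
      have hc' : HasDerivAt (fun y : ℝ => Real.log (1 - y)) (-(1 - x)⁻¹) x := by
        have := hb.comp x ha
        refine this.congr_deriv ?_; ring
      have h1 : HasDerivAt (fun y : ℝ => (1 - y) * Real.log (1 - y))
          ((-1) * Real.log (1 - x) + (1 - x) * (-(1 - x)⁻¹)) x := ha.mul hc'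
      have h2 : HasDerivAt (fun y : ℝ => y * Real.log y)
          (1 * Real.log x + x * x⁻¹) x := (hasDerivAt_id x).mul (Real.hasDerivAt_log (ne_of_gt hx))
      have h3 := h1.sub h2
      refine h3.congr_deriv ?_
      have hx0 : x ≠ 0 := ne_of_gt hx
      have hx10 : (1:ℝ) - x ≠ 0 := by linarith
      field_simp
      ring
    have hcont : ContinuousOn η (Icc h (1/2)) := by
      intro x hx
      have hx0 : 0 < x := lt_of_lt_of_le h0 hx.1
      have hx1 : x < 1 := lt_of_le_of_lt hx.2 (by norm_num)
      exact ((hd x hx0 hx1).continuousAt).continuousWithinAt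
    obtain ⟨ξ, hξ, hval⟩ := exists_hasDerivAt_eq_slope η
      (fun x => -(2 + Real.log x + Real.log (1 - x))) h12 hcont
      (fun x hx => hd x (lt_of_lt_of_le h0 (le_of_lt hx.1)) (lt_trans hx.2 (by norm_num)))
    have hη12 : η (1/2) = 0 := by simp only [hη]; norm_num
    have hξ0 : 0 < ξ := lt_of_lt_of_le h0 (le_of_lt hξ.1)
    have hξe : Real.exp (-1) ≤ ξ := le_trans hbig (le_of_lt hξ.1)
    have hξ12 : ξ < 1/2 := hξ.2
    -- ξ(1-ξ) > exp(-2)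
    have hkey : Real.exp (-2) < ξ * (1 - ξ) := by
      have he1 : (2:ℝ) < Real.exp 1 := by
        have := Real.exp_one_gt_d9
        linarith
      have h1 : Real.exp (-1) * (1/2) ≤ ξ * (1/2) := by nlinarith [Real.exp_pos (-1)]
      have h2 : ξ * (1/2) ≤ ξ * (1 - ξ) := by nlinarith
      have h3 : Real.exp (-2) < Real.exp (-1) * (1/2) := by
        have : Real.exp (-2) * Real.exp 1 = Real.exp (-1) := by
          rw [← Real.exp_add]; norm_num
        nlinarith [Real.exp_pos (-2)]
      linarith
    have hderneg : -(2 + Real.log ξ + Real.log (1 - ξ)) < 0 := by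
      have h1 : Real.log (Real.exp (-2)) < Real.log (ξ * (1 - ξ)) :=
        Real.log_lt_log (Real.exp_pos _) hkey
      rw [Real.log_exp, Real.log_mul (ne_of_gt hξ0) (by linarith : (1:ℝ) - ξ ≠ 0)] at h1
      linarith
    have hslope : (η (1/2) - η h) / (1/2 - h) < 0 := by rw [← hval]; exact hderneg
    have hdenom : (0:ℝ) < 1/2 - h := by linarith
    have : η (1/2) - η h < 0 := by
      by_contra hcon
      push_neg at hcon
      have := div_nonneg hcon (le_of_lt hdenom)
      linarith
    rw [hη12] at this
    simp only [hη] at this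
    linarith

/-- pairing property used in the inductive cross-term bound -/
def GoodPair (lam c : ℝ) : Prop :=
  ∀ u : ℝ, 0 < u → u < 1 → 1 ≤ (c - lam * Real.log u) * (c - lam * Real.log (1 - u))

theorem exists_good (h : ℝ) (h0 : 0 < h) (h12 : h ≤ 1/2) :
    ∃ lam c : ℝ, 0 ≤ lam ∧ 0 ≤ c ∧
      lam * (-h * Real.log h - (1 - h) * Real.log (1 - h)) + c
        = 2 * Real.sqrt (h * (1 - h)) ∧ GoodPair lam c := by
  rcases eq_or_lt_of_le h12 with rfl | hlt
  · -- h = 1/2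
    refine ⟨0, 1, le_refl _, by norm_num, ?_, ?_⟩
    · have : ((1:ℝ)/2) * (1 - 1/2) = (1/2)^2 := by norm_num
      rw [this, Real.sqrt_sq (by norm_num : (0:ℝ) ≤ 1/2)]
      ring
    · intro u hu hu1
      norm_num
  · -- h < 1/2
    set L : ℝ := Real.log (1 - h) - Real.log h with hL
    set σ : ℝ := Real.sqrt (h * (1 - h)) with hσ
    have hσpos : 0 < σ := Real.sqrt_pos.mpr (by nlinarith)
    have hσ2 : σ ^ 2 = h * (1 - h) := Real.sq_sqrt (by nlinarith)
    have hLpos : 0 < L := by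
      have : Real.log h < Real.log (1 - h) := Real.log_lt_log h0 (by linarith)
      simp only [hL]; linarith
    set Hh : ℝ := -h * Real.log h - (1 - h) * Real.log (1 - h) with hHh
    set lam : ℝ := (1 - 2*h) / (σ * L) with hlam
    have hlampos : 0 < lam := div_pos (by linarith) (by positivity)
    set c : ℝ := 2 * σ - lam * Hh with hcdef
    have hM := claimM h h0 hlt
    have hexpand : (1 - 2*h) * Hh - 2 * (h * (1 - h)) * L
        = h * Real.log h - (1 - h) * Real.log (1 - h) := by
      simp only [hHh, hL]; ring
    have hnum : (1 - 2*h) * Hh < 2 * (h * (1 - h)) * L := by linarith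
    have hlamHh : lam * Hh = ((1 - 2*h) * Hh) / (σ * L) := by
      simp only [hlam]; ring
    have hcpos : 0 < c := by
      have hdpos : (0:ℝ) < σ * L := by positivity
      have h1 : ((1 - 2*h) * Hh) / (σ * L) < (2 * (h * (1 - h)) * L) / (σ * L) :=
        (div_lt_div_iff_of_pos_right hdpos).mpr hnum
      have h2 : (2 * (h * (1 - h)) * L) / (σ * L) = 2 * σ := by
        rw [← hσ2]
        field_simp
      rw [h2] at h1
      rw [← hlamHh] at h1
      simp only [hcdef]
      linarith
    have hlamL : lam * L = (1 - 2*h) / σ := by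
      simp only [hlam]
      field_simp
    have e_h : c - lam * Real.log h = (1 - h) / σ := by
      have h1 : Hh + Real.log h = -((1 - h) * L) := by
        simp only [hHh, hL]; ring
      have h2 : c - lam * Real.log h = 2 * σ - lam * (Hh + Real.log h) := by
        simp only [hcdef]; ring
      rw [h1] at h2
      have h3 : lam * -((1 - h) * L) = -((1 - h) * (lam * L)) := by ring
      rw [h3, hlamL] at h2
      rw [h2]
      have hσne : σ ≠ 0 := ne_of_gt hσpos
      have hcomb : 2*σ - -((1 - h) * ((1 - 2*h)/σ)) = (2*σ^2 + (1 - h)*(1 - 2*h))/σ := by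
        field_simp
        ring
      rw [hcomb, hσ2]
      congr 1
      ring
    have e_1h : c - lam * Real.log (1 - h) = h / σ := by
      have h1 : Hh + Real.log (1 - h) = h * L := by
        simp only [hHh, hL]; ring
      have h2 : c - lam * Real.log (1 - h) = 2 * σ - lam * (Hh + Real.log (1 - h)) := by
        simp only [hcdef]; ring
      rw [h1] at h2
      have h3 : lam * (h * L) = h * (lam * L) := by ring
      rw [h3, hlamL] at h2
      rw [h2]
      have hσne : σ ≠ 0 := ne_of_gt hσpos
      have hcomb : 2*σ - h * ((1 - 2*h)/σ) = (2*σ^2 - h*(1 - 2*h))/σ := by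
        field_simp
      rw [hcomb, hσ2]
      congr 1
      ring
    have e0 : (c - lam * Real.log h) * (c - lam * Real.log (1 - h)) = 1 := by
      rw [e_h, e_1h]
      have hσne : σ ≠ 0 := ne_of_gt hσpos
      rw [div_mul_div_comm]
      have hss : σ * σ = h * (1 - h) := by nlinarith [hσ2]
      rw [hss]
      rw [div_eq_one_iff_eq (by nlinarith : h * (1 - h) ≠ 0)]
      ring
    have e1 : h * (c - lam * Real.log h) = (1 - h) * (c - lam * Real.log (1 - h)) := by
      rw [e_h, e_1h]; ring
    refine ⟨lam, c, le_of_lt hlampos, le_of_lt hcpos, ?_, ?_⟩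
    · simp only [hcdef, hHh, hσ]
      ring
    · intro u hu hu1
      exact good_abstract lam c h h0 hlt hlampos hcpos e0 e1 u hu hu1


noncomputable def LB (lam c : ℝ) (m : ℕ) (a : ℝ) : ℝ := lam * Real.log a + c * m

lemma LB_star (lam c : ℝ) (hGood : GoodPair lam c) (m : ℕ) (a₀ a₁ : ℝ)
    (h0 : 1 ≤ a₀) (h1 : 1 ≤ a₁) :
    1 ≤ (LB lam c (m+1) (a₀ + a₁) - LB lam c m a₀) *
        (LB lam c (m+1) (a₀ + a₁) - LB lam c m a₁) := by
  have hs : (0:ℝ) < a₀ + a₁ := by linarith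
  set u : ℝ := a₀ / (a₀ + a₁) with hu
  have hu0 : 0 < u := div_pos (by linarith) hs
  have hu1 : u < 1 := by
    rw [hu, div_lt_one hs]; linarith
  have h1u : 1 - u = a₁ / (a₀ + a₁) := by
    rw [hu]; field_simp; ring
  have hlogu : Real.log u = Real.log a₀ - Real.log (a₀ + a₁) :=
    Real.log_div (by linarith) (ne_of_gt hs)
  have hlog1u : Real.log (1 - u) = Real.log a₁ - Real.log (a₀ + a₁) := by
    rw [h1u]; exact Real.log_div (by linarith) (ne_of_gt hs)
  have := hGood u hu0 hu1
  have e0 : c - lam * Real.log u = LB lam c (m+1) (a₀ + a₁) - LB lam c m a₀ := by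
    rw [hlogu]; unfold LB; push_cast; ring
  have e1 : c - lam * Real.log (1 - u) = LB lam c (m+1) (a₀ + a₁) - LB lam c m a₁ := by
    rw [hlog1u]; unfold LB; push_cast; ring
  rw [e0, e1] at this
  exact this

set_option maxHeartbeats 2000000 in
theorem keyAux2 (lam c : ℝ) (hlam : 0 ≤ lam) (hc : 0 ≤ c) (hGood : GoodPair lam c) :
    ∀ (n : ℕ) (A : Finset (Fin n → Bool)) (f : (Fin n → Bool) → ℝ),
      (∀ x, x ∉ A → f x = 0) →
      ∑ x : Fin n → Bool, ∑ i : Fin n, f x * f (Function.update x i (!x i)) ≤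
        LB lam c n (A.card : ℝ) * ∑ x : Fin n → Bool, f x ^ 2 := by
  intro n
  induction n with
  | zero =>
      intro A f hf
      have h1 : ∀ x : Fin 0 → Bool,
          ∑ i : Fin 0, f x * f (Function.update x i (!x i)) = 0 := by
        intro x; simp
      rw [Finset.sum_congr rfl (fun x _ => h1 x)]
      have hcard : A.card = 0 ∨ A.card = 1 := by
        have h2 : A.card ≤ 1 := by
          have := Finset.card_le_univ A
          simpa using this
        omega
      have : LB lam c 0 (A.card : ℝ) = 0 := by
        rcases hcard with h | h <;> (rw [h]; unfold LB; norm_num)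
      rw [this]
      simp
  | succ n IH =>
      intro A f hf
      classical
      set g : Bool → (Fin n → Bool) → ℝ := fun b z => f (Fin.cons b z) with hg
      set Ab : Bool → Finset (Fin n → Bool) :=
        fun b => Finset.univ.filter (fun z => Fin.cons b z ∈ A) with hAb
      have hsupp : ∀ b, ∀ z, z ∉ Ab b → g b z = 0 := by
        intro b z hz
        apply hf
        intro hmem
        exact hz (by simp [hAb, hmem])
      have key0 : ∀ (F : (Fin (n+1) → Bool) → ℝ),
          ∑ x : Fin (n+1) → Bool, F x
            = ∑ z : Fin n → Bool, F (Fin.cons false z)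
              + ∑ z : Fin n → Bool, F (Fin.cons true z) := by
        intro F
        rw [← (Fin.consEquiv (fun _ => Bool)).sum_comp F, Fintype.sum_prod_type,
          Fintype.sum_bool]
        rw [add_comm]
        rfl
      have hcard : (A.card : ℝ) = ((Ab false).card : ℝ) + ((Ab true).card : ℝ) := by
        have h1 : ((A.card : ℕ) : ℝ)
            = ∑ x : Fin (n+1) → Bool, if x ∈ A then (1:ℝ) else 0 := by
          rw [Finset.sum_boole]
          congr 1
          congr 1
          rw [Finset.filter_mem_eq_inter, Finset.univ_inter]
        have h3 : ∀ b, (∑ z : Fin n → Bool, if Fin.cons b z ∈ A then (1:ℝ) else 0)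
            = ((Ab b).card : ℝ) := by
          intro b
          rw [Finset.sum_boole]
        rw [h1, key0 (fun x => if x ∈ A then (1:ℝ) else 0)]
        rw [← h3 false, ← h3 true]
      have hsq : ∑ x : Fin (n+1) → Bool, f x ^ 2
          = ∑ z : Fin n → Bool, g false z ^ 2 + ∑ z : Fin n → Bool, g true z ^ 2 :=
        key0 (fun x => f x ^ 2)
      have hterm : ∀ (b : Bool) (z : Fin n → Bool),
          (∑ i : Fin (n+1),
            f (Fin.cons b z) * f (Function.update (Fin.cons b z) i
              (!(Fin.cons (α := fun _ => Bool) b z i))))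
          = g b z * g (!b) z
            + ∑ i : Fin n, g b z * g b (Function.update z i (!z i)) := by
        intro b z
        rw [Fin.sum_univ_succ]
        congr 1
        · rw [Fin.cons_zero, Fin.update_cons_zero]
        · refine Finset.sum_congr rfl fun i _ => ?_
          rw [Fin.cons_succ, ← Fin.cons_update]
      have hmain : ∑ x : Fin (n+1) → Bool, ∑ i : Fin (n+1), f x * f (Function.update x i (!x i))
          = 2 * ∑ z : Fin n → Bool, g false z * g true z
            + (∑ z : Fin n → Bool, ∑ i : Fin n, g false z * g false (Function.update z i (!z i)))
            + (∑ z : Fin n → Bool, ∑ i : Fin n, g true z * g true (Function.update z i (!z i))) := by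
        rw [key0 (fun x => ∑ i : Fin (n+1), f x * f (Function.update x i (!x i)))]
        show (∑ z : Fin n → Bool, ∑ i : Fin (n+1),
            f (Fin.cons false z) * f (Function.update (Fin.cons false z) i
              (!(Fin.cons (α := fun _ => Bool) false z i))))
          + (∑ z : Fin n → Bool, ∑ i : Fin (n+1),
            f (Fin.cons true z) * f (Function.update (Fin.cons true z) i
              (!(Fin.cons (α := fun _ => Bool) true z i)))) = _
        rw [Finset.sum_congr rfl (fun z _ => hterm false z),
            Finset.sum_congr rfl (fun z _ => hterm true z),
            Finset.sum_add_distrib, Finset.sum_add_distrib]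
        have hswap : ∑ z : Fin n → Bool, g true z * g (!true) z
            = ∑ z : Fin n → Bool, g false z * g true z := by
          refine Finset.sum_congr rfl fun z _ => ?_
          show g true z * g false z = g false z * g true z
          ring
        have hswap2 : ∑ z : Fin n → Bool, g false z * g (!false) z
            = ∑ z : Fin n → Bool, g false z * g true z := rfl
        rw [hswap, hswap2]
        ring
      have hIH0 := IH (Ab false) (g false) (hsupp false)
      have hIH1 := IH (Ab true) (g true) (hsupp true)
      have hU : (0:ℝ) ≤ ∑ z : Fin n → Bool, g false z ^ 2 :=
        Finset.sum_nonneg fun z _ => sq_nonneg _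
      have hV : (0:ℝ) ≤ ∑ z : Fin n → Bool, g true z ^ 2 :=
        Finset.sum_nonneg fun z _ => sq_nonneg _
      rw [hmain, hsq]
      by_cases hA0 : (Ab false).Nonempty
      · by_cases hA1 : (Ab true).Nonempty
        · -- both halves nonempty
          have hc0 : (1:ℝ) ≤ ((Ab false).card : ℝ) := by
            exact_mod_cast Finset.card_pos.mpr hA0
          have hc1 : (1:ℝ) ≤ ((Ab true).card : ℝ) := by
            exact_mod_cast Finset.card_pos.mpr hA1
          have hstar := LB_star lam c hGood n ((Ab false).card : ℝ) ((Ab true).card : ℝ)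
            hc0 hc1
          rw [← hcard] at hstar
          have hmono0 : LB lam c n ((Ab false).card : ℝ) ≤ LB lam c (n+1) (A.card : ℝ) := by
            unfold LB
            have hlog : Real.log ((Ab false).card : ℝ) ≤ Real.log (A.card : ℝ) := by
              apply Real.log_le_log (by linarith)
              rw [hcard]; linarith
            push_cast
            nlinarith
          have hmono1 : LB lam c n ((Ab true).card : ℝ) ≤ LB lam c (n+1) (A.card : ℝ) := by
            unfold LB
            have hlog : Real.log ((Ab true).card : ℝ) ≤ Real.log (A.card : ℝ) := by
              apply Real.log_le_log (by linarith)
              rw [hcard]; linarith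
            push_cast
            nlinarith
          have hcs := Finset.sum_mul_sq_le_sq_mul_sq Finset.univ (g false) (g true)
          set M := LB lam c (n+1) (A.card : ℝ)
          set M0 := LB lam c n ((Ab false).card : ℝ)
          set M1 := LB lam c n ((Ab true).card : ℝ)
          set U := ∑ z : Fin n → Bool, g false z ^ 2
          set V := ∑ z : Fin n → Bool, g true z ^ 2
          set W := ∑ z : Fin n → Bool, g false z * g true z
          have hcross : 2 * W ≤ (M - M0) * U + (M - M1) * V := by
            nlinarith [hcs, hstar, sq_nonneg ((M - M0) * U - (M - M1) * V),
              mul_nonneg (sub_nonneg.mpr hmono0) hU, mul_nonneg (sub_nonneg.mpr hmono1) hV]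
          calc 2 * W
              + (∑ z : Fin n → Bool, ∑ i : Fin n, g false z * g false (Function.update z i (!z i)))
              + (∑ z : Fin n → Bool, ∑ i : Fin n, g true z * g true (Function.update z i (!z i)))
              ≤ ((M - M0) * U + (M - M1) * V) + M0 * U + M1 * V := by
                linarith [hIH0, hIH1]
            _ = M * (U + V) := by ring
        · -- true half empty
          have hz1 : ∀ z, g true z = 0 := fun z => hsupp true z
            (by simp [Finset.not_nonempty_iff_eq_empty.mp hA1])
          have hW0 : ∑ z : Fin n → Bool, g false z * g true z = 0 :=
            Finset.sum_eq_zero fun z _ => by rw [hz1]; ring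
          have hC1 : (∑ z : Fin n → Bool, ∑ i : Fin n,
              g true z * g true (Function.update z i (!z i))) = 0 :=
            Finset.sum_eq_zero fun z _ => Finset.sum_eq_zero fun i _ => by rw [hz1]; ring
          have hV0 : (∑ z : Fin n → Bool, g true z ^ 2) = 0 :=
            Finset.sum_eq_zero fun z _ => by rw [hz1]; ring
          have hc0 : (1:ℝ) ≤ ((Ab false).card : ℝ) := by
            exact_mod_cast Finset.card_pos.mpr hA0
          have hceq : (A.card : ℝ) = ((Ab false).card : ℝ) := by
            rw [hcard, Finset.not_nonempty_iff_eq_empty.mp hA1]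
            simp
          have hmono0 : LB lam c n ((Ab false).card : ℝ) ≤ LB lam c (n+1) (A.card : ℝ) := by
            unfold LB
            rw [hceq]
            push_cast
            nlinarith
          rw [hW0, hC1, hV0]
          have h1 : (∑ z : Fin n → Bool, ∑ i : Fin n,
              g false z * g false (Function.update z i (!z i)))
              ≤ LB lam c (n+1) (A.card : ℝ) * ∑ z : Fin n → Bool, g false z ^ 2 :=
            le_trans hIH0 (mul_le_mul_of_nonneg_right hmono0 hU)
          linarith
      · -- false half empty
        have hz0 : ∀ z, g false z = 0 := fun z => hsupp false z
          (by simp [Finset.not_nonempty_iff_eq_empty.mp hA0])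
        have hW0 : ∑ z : Fin n → Bool, g false z * g true z = 0 :=
          Finset.sum_eq_zero fun z _ => by rw [hz0]; ring
        have hC0 : (∑ z : Fin n → Bool, ∑ i : Fin n,
            g false z * g false (Function.update z i (!z i))) = 0 :=
          Finset.sum_eq_zero fun z _ => Finset.sum_eq_zero fun i _ => by rw [hz0]; ring
        have hU0 : (∑ z : Fin n → Bool, g false z ^ 2) = 0 :=
          Finset.sum_eq_zero fun z _ => by rw [hz0]; ring
        rw [hW0, hC0, hU0]
        by_cases hA1 : (Ab true).Nonempty
        · have hc1 : (1:ℝ) ≤ ((Ab true).card : ℝ) := by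
            exact_mod_cast Finset.card_pos.mpr hA1
          have hceq : (A.card : ℝ) = ((Ab true).card : ℝ) := by
            rw [hcard, Finset.not_nonempty_iff_eq_empty.mp hA0]
            simp
          have hmono1 : LB lam c n ((Ab true).card : ℝ) ≤ LB lam c (n+1) (A.card : ℝ) := by
            unfold LB
            rw [hceq]
            push_cast
            nlinarith
          have h1 : (∑ z : Fin n → Bool, ∑ i : Fin n,
              g true z * g true (Function.update z i (!z i)))
              ≤ LB lam c (n+1) (A.card : ℝ) * ∑ z : Fin n → Bool, g true z ^ 2 :=
            le_trans hIH1 (mul_le_mul_of_nonneg_right hmono1 hV)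
          linarith
        · have hz1 : ∀ z, g true z = 0 := fun z => hsupp true z
            (by simp [Finset.not_nonempty_iff_eq_empty.mp hA1])
          have hC1 : (∑ z : Fin n → Bool, ∑ i : Fin n,
              g true z * g true (Function.update z i (!z i))) = 0 :=
            Finset.sum_eq_zero fun z _ => Finset.sum_eq_zero fun i _ => by rw [hz1]; ring
          have hV0 : (∑ z : Fin n → Bool, g true z ^ 2) = 0 :=
            Finset.sum_eq_zero fun z _ => by rw [hz1]; ring
          rw [hC1, hV0]
          have hLB : 0 ≤ LB lam c (n+1) (A.card : ℝ) := by
            unfold LB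
            have : 0 ≤ Real.log (A.card : ℝ) := by
              rcases Nat.eq_zero_or_pos A.card with h | h
              · rw [h]; simp
              · apply Real.log_nonneg; exact_mod_cast h
            positivity
          nlinarith


lemma sum_cross_singleton (n : ℕ) (A : Finset (Fin n → Bool)) (hcard : A.card = 1)
    (f : (Fin n → Bool) → ℝ) (hf : ∀ x, x ∉ A → f x = 0) :
    ∑ x : Fin n → Bool, ∑ i : Fin n, f x * f (Function.update x i (!x i)) = 0 := by
  obtain ⟨z, hz⟩ := Finset.card_eq_one.mp hcard
  subst hz
  apply Finset.sum_eq_zero; intro x _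
  apply Finset.sum_eq_zero; intro i _
  by_cases hx : x = z
  · subst hx
    have hne : Function.update x i (!x i) ≠ x := by
      intro hEq
      have h2 := congrFun hEq i
      rw [Function.update_self] at h2
      simp at h2
    have h0 : f (Function.update x i (!x i)) = 0 := by
      apply hf
      simp only [Finset.mem_singleton]
      exact hne
    rw [h0]; ring
  · have h0 : f x = 0 := by
      apply hf
      simp only [Finset.mem_singleton]
      exact hx
    rw [h0]; ring

theorem keyLemma (n : ℕ) (A : Finset (Fin n → Bool)) (hA : A.Nonempty)
    (Hinv : ℝ → ℝ)
    (hHinv : ∀ y ∈ Set.Icc (0 : ℝ) (Real.log 2),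
      Hinv y ∈ Set.Icc (0 : ℝ) (1 / 2) ∧
        -(Hinv y) * Real.log (Hinv y) - (1 - Hinv y) * Real.log (1 - Hinv y) = y)
    (f : (Fin n → Bool) → ℝ) (hf : ∀ x, x ∉ A → f x = 0) :
    ∑ x : Fin n → Bool, ∑ i : Fin n, f x * f (Function.update x i (!x i)) ≤
      2 * Real.sqrt (Hinv (Real.log A.card / n) * (1 - Hinv (Real.log A.card / n))) * n *
        ∑ x : Fin n → Bool, f x ^ 2 := by
  classical
  rcases le_or_gt A.card 1 with hle | hge2
  · have hcard1 : A.card = 1 := le_antisymm hle (Finset.card_pos.mpr hA)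
    rw [sum_cross_singleton n A hcard1 f hf]
    have h1 : (0:ℝ) ≤ ∑ x : Fin n → Bool, f x ^ 2 :=
      Finset.sum_nonneg fun x _ => sq_nonneg _
    have h2 : (0:ℝ) ≤ Real.sqrt (Hinv (Real.log A.card / n) * (1 - Hinv (Real.log A.card / n))) :=
      Real.sqrt_nonneg _
    positivity
  · have hn : 1 ≤ n := by
      by_contra hn0
      push_neg at hn0
      interval_cases n
      · have h2 : A.card ≤ 1 := by
          have := Finset.card_le_univ A
          simpa using this
        omega
    have ha2 : (2:ℝ) ≤ (A.card : ℝ) := by exact_mod_cast hge2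
    have hapos : (0:ℝ) < (A.card : ℝ) := by linarith
    have hcub : (A.card : ℝ) ≤ 2 ^ n := by
      have h1 := Finset.card_le_univ A
      have h2 : (Finset.univ : Finset (Fin n → Bool)).card = 2 ^ n := by
        simp [Finset.card_univ]
      calc (A.card:ℝ) ≤ ((Finset.univ : Finset (Fin n → Bool)).card : ℝ) := by
            exact_mod_cast h1
        _ = 2 ^ n := by rw [h2]; push_cast; ring
    have hnpos : (0:ℝ) < (n : ℝ) := by exact_mod_cast hn
    set y : ℝ := Real.log (A.card : ℝ) / (n : ℝ) with hy
    have hy0 : 0 < y := by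
      apply div_pos ?_ hnpos
      exact Real.log_pos (by linarith)
    have hy2 : y ≤ Real.log 2 := by
      rw [hy, div_le_iff₀ hnpos]
      calc Real.log ((A.card : ℝ)) ≤ Real.log ((2:ℝ) ^ n) :=
            Real.log_le_log hapos hcub
        _ = Real.log 2 * (n:ℝ) := by
            rw [Real.log_pow]; push_cast; ring
    obtain ⟨hmem, hHy⟩ := hHinv y ⟨le_of_lt hy0, hy2⟩
    set h : ℝ := Hinv y with hh
    have h12 : h ≤ 1/2 := hmem.2
    have h0 : 0 < h := by
      rcases eq_or_lt_of_le hmem.1 with heq | hpos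
      · exfalso
        rw [← heq] at hHy
        simp at hHy
        linarith
      · exact hpos
    obtain ⟨lam, cc, hlam, hcc, hid, hGood⟩ := exists_good h h0 h12
    have hkey := keyAux2 lam cc hlam hcc hGood n A f hf
    have hiden : LB lam cc n ((A.card : ℕ) : ℝ) = 2 * Real.sqrt (h * (1 - h)) * (n:ℝ) := by
      unfold LB
      have hlog : Real.log ((A.card : ℕ) : ℝ) = y * (n : ℝ) := by
        rw [hy]; field_simp
      rw [hHy] at hid
      rw [hlog]
      nlinarith [hid]
    rw [hiden] at hkey
    exact hkey


/-- the flip involution in direction i -/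
def flip1 (n : ℕ) (i : Fin n) : (Fin n → Bool) ≃ (Fin n → Bool) where
  toFun x := Function.update x i (!x i)
  invFun x := Function.update x i (!x i)
  left_inv x := by
    funext j
    by_cases h : j = i
    · subst h; simp [Function.update]
    · simp [Function.update, h]
  right_inv x := by
    funext j
    by_cases h : j = i
    · subst h; simp [Function.update]
    · simp [Function.update, h]

lemma sum_flip (n : ℕ) (i : Fin n) (F : (Fin n → Bool) → ℝ) :
    ∑ x : Fin n → Bool, F (Function.update x i (!x i)) = ∑ x : Fin n → Bool, F x :=
  Fintype.sum_equiv (flip1 n i) (fun x => F (Function.update x i (!x i))) F (fun _ => rfl)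

theorem fracBoundary_lower_bound' (n : ℕ) (hn : 1 ≤ n)
    (A : Finset (Fin n → Bool)) (hA : A.Nonempty)
    (Hinv : ℝ → ℝ)
    (hHinv : ∀ y ∈ Set.Icc (0 : ℝ) (Real.log 2),
      Hinv y ∈ Set.Icc (0 : ℝ) (1 / 2) ∧
        -(Hinv y) * Real.log (Hinv y) - (1 - Hinv y) * Real.log (1 - Hinv y) = y)
    (f : (Fin n → Bool) → ℝ) (hf : ∀ x, x ∉ A → f x = 0)
    (hE : cubeE n (fun x => f x ^ 2) = (A.card : ℝ) / 2 ^ n) :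
    cubeD2 n f ≥
      4 * n *
        (1 / 2 -
          Real.sqrt (Hinv (Real.log A.card / n) * (1 - Hinv (Real.log A.card / n)))) *
        ((A.card : ℝ) / 2 ^ n) := by
  classical
  set s : ℝ := Real.sqrt (Hinv (Real.log A.card / n) * (1 - Hinv (Real.log A.card / n))) with hs
  have hsum : ∑ x : Fin n → Bool, f x ^ 2 = (A.card : ℝ) := by
    have h2 : (2:ℝ)^n ≠ 0 := by positivity
    have := hE
    unfold cubeE at this
    field_simp at this
    linarith [this]
  have hexp : cubeD2 n f =
      (2 * n * ∑ x : Fin n → Bool, f x ^ 2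
        - 2 * ∑ x : Fin n → Bool, ∑ i : Fin n, f x * f (Function.update x i (!x i))) / 2 ^ n := by
    unfold cubeD2 cubeE
    congr 1
    have hpt : ∀ x : Fin n → Bool, ∀ i : Fin n,
        (f x - f (Function.update x i (!x i))) ^ 2
          = f x ^ 2 + f (Function.update x i (!x i)) ^ 2
            - 2 * (f x * f (Function.update x i (!x i))) := by
      intro x i; ring
    calc ∑ x : Fin n → Bool, ∑ i : Fin n, (f x - f (Function.update x i (!x i))) ^ 2
        = ∑ x : Fin n → Bool, ∑ i : Fin n,
            (f x ^ 2 + f (Function.update x i (!x i)) ^ 2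
              - 2 * (f x * f (Function.update x i (!x i)))) := by
          refine Finset.sum_congr rfl fun x _ => Finset.sum_congr rfl fun i _ => hpt x i
      _ = (∑ x : Fin n → Bool, ∑ i : Fin n, f x ^ 2)
            + (∑ x : Fin n → Bool, ∑ i : Fin n, f (Function.update x i (!x i)) ^ 2)
            - 2 * ∑ x : Fin n → Bool, ∑ i : Fin n, f x * f (Function.update x i (!x i)) := by
          simp only [Finset.sum_add_distrib, Finset.sum_sub_distrib, ← Finset.mul_sum]
      _ = (2 * n * ∑ x : Fin n → Bool, f x ^ 2)
            - 2 * ∑ x : Fin n → Bool, ∑ i : Fin n, f x * f (Function.update x i (!x i)) := by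
          have h1 : ∑ x : Fin n → Bool, ∑ i : Fin n, f x ^ 2
              = (n : ℝ) * ∑ x : Fin n → Bool, f x ^ 2 := by
            simp [Finset.sum_const, Finset.mul_sum, mul_comm]
          have h2 : ∑ x : Fin n → Bool, ∑ i : Fin n, f (Function.update x i (!x i)) ^ 2
              = (n : ℝ) * ∑ x : Fin n → Bool, f x ^ 2 := by
            rw [Finset.sum_comm]
            have : ∀ i : Fin n, ∑ x : Fin n → Bool, f (Function.update x i (!x i)) ^ 2
                = ∑ x : Fin n → Bool, f x ^ 2 := by
              intro i
              exact sum_flip n i (fun z => f z ^ 2)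
            rw [Finset.sum_congr rfl (fun i _ => this i)]
            simp [Finset.sum_const, mul_comm]
          rw [h1, h2]; ring
  have hkey := keyLemma n A hA Hinv hHinv f hf
  rw [hsum] at hkey
  rw [hexp, hsum, ge_iff_le]
  have h2n : (0:ℝ) < 2 ^ n := by positivity
  have hgoal2 : 4 * (n:ℝ) * (1 / 2 - s) * ((A.card : ℝ) / 2 ^ n)
      = (4 * (n:ℝ) * (1 / 2 - s) * (A.card : ℝ)) / 2 ^ n := by ring
  rw [hgoal2]
  have hlin : 4 * (n:ℝ) * (1 / 2 - s) * (A.card : ℝ)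
      ≤ 2 * (n:ℝ) * (A.card : ℝ)
        - 2 * ∑ x : Fin n → Bool, ∑ i : Fin n, f x * f (Function.update x i (!x i)) := by
    nlinarith [hkey]
  gcongr

/-- **Discrete Faber–Krahn lower bound**: for any nonempty `A ⊆ {0,1}^n`,
`|∂*A| ≥ 4n·(1/2 − √(H⁻¹(log|A|/n)·(1 − H⁻¹(log|A|/n))))·|A|/2^n`. -/
theorem fracBoundary_lower_bound (n : ℕ) (hn : 1 ≤ n)
    (A : Finset (Fin n → Bool)) (hA : A.Nonempty)
    (Hinv : ℝ → ℝ)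
    (hHinv : ∀ y ∈ Set.Icc (0 : ℝ) (Real.log 2),
      Hinv y ∈ Set.Icc (0 : ℝ) (1 / 2) ∧
        -(Hinv y) * Real.log (Hinv y) - (1 - Hinv y) * Real.log (1 - Hinv y) = y) :
    fracBoundary n A ≥
      4 * n *
        (1 / 2 -
          Real.sqrt (Hinv (Real.log A.card / n) * (1 - Hinv (Real.log A.card / n)))) *
        ((A.card : ℝ) / 2 ^ n) := by
  classical
  apply le_csInf
  · refine ⟨cubeD2 n (fun x => if x ∈ A then (1:ℝ) else 0),
      fun x => if x ∈ A then (1:ℝ) else 0, fun x hx => by simp [hx], ?_, rfl⟩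
    unfold cubeE
    congr 1
    have : ∀ x : Fin n → Bool, (if x ∈ A then (1:ℝ) else 0) ^ 2
        = (if x ∈ A then (1:ℝ) else 0) := by
      intro x; by_cases h : x ∈ A <;> simp [h]
    rw [Finset.sum_congr rfl (fun x _ => this x)]
    simp
  · rintro v ⟨f, hf, hE, rfl⟩
    exact fracBoundary_lower_bound' n hn A hA Hinv hHinv f hf hE
end

section
/- Let n ≥ 1 and let f : {0,1}^n → ℝ be a nonnegative function. Then Ent(f²) ≤ 2 log 2 · K²(f), where K²(f) = (1/4) · E_x Σ_{y∼x} (f(x) + f(y))². -/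
/-- `K²(f) = (1/4)·E_x ∑_{y∼x} (f x + f y)²` on the Hamming cube `{0,1}^n`. -/
noncomputable def cubeK2 (n : ℕ) (f : (Fin n → Bool) → ℝ) : ℝ :=
  (1 / 4) * cubeE n (fun x => ∑ i : Fin n, (f x + f (Function.update x i (!x i))) ^ 2)

private lemma update_invol (n : ℕ) (i : Fin n) :
    Function.Involutive (fun x : Fin n → Bool => Function.update x i (!x i)) := by
  intro x
  simp [Function.update_idem]

private lemma sum_update (n : ℕ) (i : Fin n) (h : (Fin n → Bool) → ℝ) :
    ∑ x : Fin n → Bool, h (Function.update x i (!x i)) = ∑ x : Fin n → Bool, h x :=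
  Fintype.sum_equiv ((update_invol n i).toPerm _) _ _ (fun _ => rfl)

/-- For a nonnegative function `f` on `{0,1}^n`, `Ent(f²) ≤ 2·log 2·K²(f)`. -/
theorem ent_le_two_log_two_K2 (n : ℕ) (hn : 1 ≤ n)
    (f : (Fin n → Bool) → ℝ) (hf : ∀ x, 0 ≤ f x) :
    cubeEnt n f ≤ 2 * Real.log 2 * cubeK2 n f := by
  have hgnn : ∀ x, (0:ℝ) ≤ f x ^ 2 := fun x => sq_nonneg _
  set S : ℝ := ∑ x : Fin n → Bool, f x ^ 2 with hS
  have hSnn : 0 ≤ S := Finset.sum_nonneg fun x _ => hgnn x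
  have h2n : (0:ℝ) < 2 ^ n := by positivity
  have hlog2 : (0:ℝ) ≤ Real.log 2 := Real.log_nonneg one_le_two
  -- K2 lower bound
  have hK : ((n:ℝ)/2) * (S / 2^n) ≤ cubeK2 n f := by
    unfold cubeK2 cubeE
    have hstep : ∀ x, (∑ i : Fin n, (f x ^ 2 + f (Function.update x i (!x i)) ^ 2)) ≤
        ∑ i : Fin n, (f x + f (Function.update x i (!x i))) ^ 2 := by
      intro x
      apply Finset.sum_le_sum
      intro i _
      have := mul_nonneg (hf x) (hf (Function.update x i (!x i)))
      nlinarith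
    have hsum : ∑ x : Fin n → Bool, ∑ i : Fin n,
        (f x ^ 2 + f (Function.update x i (!x i)) ^ 2) = 2 * n * S := by
      rw [Finset.sum_comm]
      have h1 : ∀ i : Fin n, ∑ x : Fin n → Bool,
          (f x ^ 2 + f (Function.update x i (!x i)) ^ 2) = 2 * S := by
        intro i
        rw [Finset.sum_add_distrib, sum_update n i (fun y => f y ^ 2)]
        ring
      rw [Finset.sum_congr rfl (fun i _ => h1 i), Finset.sum_const]
      simp
      ring
    have hle : 2 * n * S ≤ ∑ x : Fin n → Bool, ∑ i : Fin n,
        (f x + f (Function.update x i (!x i))) ^ 2 := by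
      rw [← hsum]
      exact Finset.sum_le_sum fun x _ => hstep x
    simp only []
    have h4 : (n:ℝ)/2 * (S/2^n) = (1/4) * ((2*n*S)/2^n) := by ring
    rw [h4]
    gcongr
  have hKnn : 0 ≤ cubeK2 n f := le_trans (by positivity) hK
  rcases eq_or_lt_of_le hSnn with hS0 | hSpos
  · -- S = 0 : everything vanishes
    have hz : ∀ x : Fin n → Bool, f x ^ 2 = 0 := by
      intro x
      have := (Finset.sum_eq_zero_iff_of_nonneg (fun x _ => hgnn x)).1 hS0.symm
      exact this x (Finset.mem_univ x)
    have hEnt0 : cubeEnt n f = 0 := by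
      unfold cubeEnt cubeE
      simp [hz]
    rw [hEnt0]
    positivity
  · -- S > 0
    have hE : 0 < S / 2^n := div_pos hSpos h2n
    have hEnt : cubeEnt n f ≤ (n : ℝ) * Real.log 2 * (S / 2^n) := by
      unfold cubeEnt cubeE
      have hpt : ∀ x : Fin n → Bool, f x ^ 2 * Real.log (f x ^ 2) ≤ f x ^ 2 * Real.log S := by
        intro x
        rcases eq_or_lt_of_le (hgnn x) with h0 | h0
        · rw [← h0]; simp
        · apply mul_le_mul_of_nonneg_left _ (hgnn x)
          apply Real.log_le_log h0
          exact Finset.single_le_sum (fun y _ => hgnn y) (Finset.mem_univ x)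
      have h1 : (∑ x : Fin n → Bool, f x ^ 2 * Real.log (f x ^ 2)) ≤ S * Real.log S := by
        calc (∑ x : Fin n → Bool, f x ^ 2 * Real.log (f x ^ 2))
            ≤ ∑ x : Fin n → Bool, f x ^ 2 * Real.log S :=
              Finset.sum_le_sum fun x _ => hpt x
          _ = S * Real.log S := by rw [← Finset.sum_mul]
      have hlogS : Real.log S = Real.log (S/2^n) + n * Real.log 2 := by
        rw [← Real.log_pow, ← Real.log_mul (ne_of_gt hE) (ne_of_gt h2n)]
        congr 1
        field_simp
      have h2 : (∑ x : Fin n → Bool, f x ^ 2 * Real.log (f x ^ 2)) / 2 ^ n ≤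
          S * Real.log S / 2 ^ n := by gcongr
      have he : S * Real.log S / 2 ^ n =
          (S/2^n) * Real.log (S/2^n) + (n:ℝ) * Real.log 2 * (S/2^n) := by
        rw [hlogS]; ring
      simp only []
      rw [← hS]
      linarith [h2, he]
    calc cubeEnt n f ≤ (n : ℝ) * Real.log 2 * (S / 2^n) := hEnt
      _ = 2 * Real.log 2 * (((n:ℝ)/2) * (S / 2^n)) := by ring
      _ ≤ 2 * Real.log 2 * cubeK2 n f := by
          apply mul_le_mul_of_nonneg_left hK (by positivity)
end
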